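/- Let A = [[1,1],[0,1]] and B = [[1,0],[2−z,1]] in SL(2,ℂ), and let m ≥ 1. The (2,1)-entry of (A⁻¹B)^m(AB⁻¹)^m equals −(z−2)²·S_{m−1}(z)², its (1,2)-entry equals (z−2)·S_{m−1}(z)², its (1,1)-entry equals S_m(z)² − 2S_m(z)S_{m−1}(z) + (3−z)S_{m−1}(z)², and its (2,2)-entry equals S_m(z)² + (2−2z)S_m(z)S_{m−1}(z) + (3−3z+z²)S_{m−1}(z)². -/
import Mathlib


noncomputable def S : ℕ → ℂ → ℂ
  | 0 => fun _ => 1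
  | 1 => fun q => q
  | (n + 2) => fun q => q * S (n + 1) q - S n q

noncomputable def T : ℕ → ℂ → ℂ
  | 0 => fun _ => 0
  | (n + 1) => fun q => S n q

lemma S_succ_eq (n : ℕ) (z : ℂ) : S (n + 1) z = z * S n z - T n z := by
  cases n with
  | zero => simp [S, T]
  | succ k => simp [S, T]

lemma pow_succ_eq (z : ℂ) (C : Matrix (Fin 2) (Fin 2) ℂ) (h : C * C = z • C - 1) (n : ℕ) :
    C ^ (n + 1) = S n z • C - T n z • 1 := by
  induction n with
  | zero => simp [S, T]
  | succ k ih =>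
    have : C ^ (k + 2) = C ^ (k + 1) * C := by rw [pow_succ]
    rw [this, ih, sub_mul, smul_mul_assoc, smul_mul_assoc, h, one_mul]
    rw [S_succ_eq, show T (k + 1) z = S k z from rfl]
    ext i j
    simp [Matrix.sub_apply, Matrix.smul_apply]
    ring

theorem stmt_17 (m : ℕ) (hm : 0 < m) (z : ℂ)
    (A B : Matrix (Fin 2) (Fin 2) ℂ)
    (hA : A = !![1, 1; 0, 1]) (hB : B = !![1, 0; 2 - z, 1]) :
    ((A⁻¹ * B) ^ m * (A * B⁻¹) ^ m) 1 0 = -(z - 2) ^ 2 * S (m - 1) z ^ 2 ∧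
    ((A⁻¹ * B) ^ m * (A * B⁻¹) ^ m) 0 1 = (z - 2) * S (m - 1) z ^ 2 ∧
    ((A⁻¹ * B) ^ m * (A * B⁻¹) ^ m) 0 0 =
      S m z ^ 2 - 2 * S m z * S (m - 1) z + (3 - z) * S (m - 1) z ^ 2 ∧
    ((A⁻¹ * B) ^ m * (A * B⁻¹) ^ m) 1 1 =
      S m z ^ 2 + (2 - 2 * z) * S m z * S (m - 1) z +
        (3 - 3 * z + z ^ 2) * S (m - 1) z ^ 2 := by
  obtain ⟨n, rfl⟩ := Nat.exists_eq_add_of_lt hm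
  simp only [Nat.zero_add, Nat.add_sub_cancel]
  have hAinv : A⁻¹ = !![1, -1; 0, 1] := by
    apply Matrix.inv_eq_right_inv
    rw [hA]
    ext i j
    fin_cases i <;> fin_cases j <;> simp [Matrix.mul_apply, Fin.sum_univ_two]
  have hBinv : B⁻¹ = !![1, 0; z - 2, 1] := by
    apply Matrix.inv_eq_right_inv
    rw [hB]
    ext i j
    fin_cases i <;> fin_cases j <;> simp [Matrix.mul_apply, Fin.sum_univ_two] <;> ring
  have hP : A⁻¹ * B = !![z - 1, -1; 2 - z, 1] := by
    rw [hAinv, hB]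
    ext i j
    fin_cases i <;> fin_cases j <;> simp [Matrix.mul_apply, Fin.sum_univ_two] <;> ring
  have hQ : A * B⁻¹ = !![z - 1, 1; z - 2, 1] := by
    rw [hA, hBinv]
    ext i j
    fin_cases i <;> fin_cases j <;> simp [Matrix.mul_apply, Fin.sum_univ_two] <;> ring
  have hP2 : (A⁻¹ * B) * (A⁻¹ * B) = z • (A⁻¹ * B) - 1 := by
    rw [hP]
    ext i j
    fin_cases i <;> fin_cases j <;>
      simp [Matrix.mul_apply, Fin.sum_univ_two, Matrix.one_apply] <;> ring
  have hQ2 : (A * B⁻¹) * (A * B⁻¹) = z • (A * B⁻¹) - 1 := by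
    rw [hQ]
    ext i j
    fin_cases i <;> fin_cases j <;>
      simp [Matrix.mul_apply, Fin.sum_univ_two, Matrix.one_apply] <;> ring
  have e1 := pow_succ_eq z _ hP2 n
  have e2 := pow_succ_eq z _ hQ2 n
  rw [e1, e2, hP, hQ]
  set a := S n z with ha
  set b := T n z with hb
  have hrel : S (n + 1) z = z * a - b := S_succ_eq n z
  rw [hrel]
  refine ⟨?_, ?_, ?_, ?_⟩ <;>
    simp [Matrix.mul_apply, Fin.sum_univ_two, Matrix.sub_apply, Matrix.smul_apply,
      Matrix.one_apply] <;> ring
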